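/- Let A, B, C ∈ ℝ² and A', B', C' ∈ ℝ² be triples of pairwise distinct points forming triangles with |AB| = |BC| and |A'B'| = |B'C'|, with equal corresponding angles (∠ABC = ∠A'B'C' and ∠BCA = ∠B'C'A'), and with all angles of the triangle ABC strictly less than 2π/3. Then the normalized Steiner deficit depends only on the angles and is strictly positive: (2|AB| − m(A,B,C))/|AB| = (2|A'B'| − m(A',B',C'))/|A'B'|, and 0 < 2|AB| − m(A,B,C) < 2|AB|. -/

import Mathlib

open Metric MeasureTheory EuclideanGeometry Filter Topology

noncomputable section

abbrev Plane := EuclideanSpace ℝ (Fin 2)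

/-- The condition `F_M(S) ≤ r`, i.e. every point of `M` is within distance `r` of `S`. -/
def MaxDistLE (M S : Set Plane) (r : ℝ) : Prop :=
  ∀ y ∈ M, Metric.infDist y S ≤ r

/-- `S` is a maximal distance minimizer for the compact set `M` and radius `r`. -/
def IsMinimizer (M : Set Plane) (r : ℝ) (S : Set Plane) : Prop :=
  IsClosed S ∧ IsConnected S ∧ MaxDistLE M S r ∧
    ∀ S' : Set Plane, IsClosed S' → IsConnected S' → MaxDistLE M S' r →
      μH[1] S ≤ μH[1] S'

/-- The Steiner length of a triple of points: the infimum of `H¹` over compact connected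
sets containing the three points. -/
def SteinerLength (X Y Z : Plane) : ℝ :=
  (sInf {m : ENNReal | ∃ K : Set Plane, IsCompact K ∧ IsConnected K ∧
      ({X, Y, Z} : Set Plane) ⊆ K ∧ m = μH[1] K}).toReal


def StSet (X Y Z : Plane) : Set ENNReal :=
  {m : ENNReal | ∃ K : Set Plane, IsCompact K ∧ IsConnected K ∧
      ({X, Y, Z} : Set Plane) ⊆ K ∧ m = μH[1] K}

lemma isCompact_seg (x y : Plane) : IsCompact (segment ℝ x y) := by
  rw [segment_eq_image_lineMap]
  exact isCompact_Icc.image (AffineMap.lineMap_continuous)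

lemma isConnected_seg (x y : Plane) : IsConnected (segment ℝ x y) :=
  (convex_segment x y).isConnected ⟨x, left_mem_segment ℝ x y⟩

lemma tree_mem (X Y Z P : Plane) :
    μH[1] (segment ℝ P X ∪ segment ℝ P Y ∪ segment ℝ P Z) ∈ StSet X Y Z := by
  refine ⟨_, ?_, ?_, ?_, rfl⟩
  · exact ((isCompact_seg P X).union (isCompact_seg P Y)).union (isCompact_seg P Z)
  · refine IsConnected.union ?_ (IsConnected.union ?_ (isConnected_seg P X) (isConnected_seg P Y))
      (isConnected_seg P Z)
    · exact ⟨P, Or.inl (left_mem_segment ℝ P X), left_mem_segment ℝ P Z⟩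
    · exact ⟨P, left_mem_segment ℝ P X, left_mem_segment ℝ P Y⟩
  · rintro t (rfl | rfl | rfl)
    · exact Or.inl (Or.inl (right_mem_segment ℝ P t))
    · exact Or.inl (Or.inr (right_mem_segment ℝ P t))
    · exact Or.inr (right_mem_segment ℝ P t)

lemma tree_le (X Y Z P : Plane) :
    μH[1] (segment ℝ P X ∪ segment ℝ P Y ∪ segment ℝ P Z) ≤
      ENNReal.ofReal (dist P X + dist P Y + dist P Z) := by
  calc μH[1] (segment ℝ P X ∪ segment ℝ P Y ∪ segment ℝ P Z)
      ≤ μH[1] (segment ℝ P X ∪ segment ℝ P Y) + μH[1] (segment ℝ P Z) := measure_union_le _ _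
    _ ≤ μH[1] (segment ℝ P X) + μH[1] (segment ℝ P Y) + μH[1] (segment ℝ P Z) := by
        gcongr; exact measure_union_le _ _
    _ = ENNReal.ofReal (dist P X) + ENNReal.ofReal (dist P Y) + ENNReal.ofReal (dist P Z) := by
        simp [hausdorffMeasure_segment, edist_dist]
    _ = ENNReal.ofReal (dist P X + dist P Y + dist P Z) := by
        rw [← ENNReal.ofReal_add dist_nonneg dist_nonneg,
          ← ENNReal.ofReal_add (by positivity) dist_nonneg]

lemma sInf_StSet_le_tree (X Y Z P : Plane) :
    sInf (StSet X Y Z) ≤ ENNReal.ofReal (dist P X + dist P Y + dist P Z) :=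
  le_trans (sInf_le (tree_mem X Y Z P)) (tree_le X Y Z P)

lemma sInf_StSet_ne_top (X Y Z : Plane) : sInf (StSet X Y Z) ≠ ⊤ :=
  ne_top_of_le_ne_top ENNReal.ofReal_ne_top (sInf_StSet_le_tree X Y Z Y)

lemma lower_bound {X Y Z : Plane} {m : ENNReal} (hm : m ∈ StSet X Y Z) :
    ENNReal.ofReal (dist X Y) ≤ m := by
  obtain ⟨K, hKc, hKconn, hKsub, rfl⟩ := hm
  rcases eq_or_ne X Y with rfl | hXY
  · simp
  have hX : X ∈ K := hKsub (by simp)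
  have hY : Y ∈ K := hKsub (by simp)
  set u : Plane := ‖Y - X‖⁻¹ • (Y - X) with hu
  have hYX : Y - X ≠ 0 := sub_ne_zero.mpr (Ne.symm hXY)
  have hun : ‖u‖ = 1 := norm_smul_inv_norm hYX
  set φ : Plane → ℝ := fun x => inner ℝ (x - X) u with hφ
  have hlip : LipschitzWith 1 φ := by
    refine LipschitzWith.of_dist_le_mul fun x y => ?_
    have : φ x - φ y = inner ℝ (x - y) u := by
      rw [hφ]; simp only [← inner_sub_left]; congr 1; abel
    rw [Real.dist_eq, this]
    calc |(inner ℝ (x - y) u : ℝ)| ≤ ‖x - y‖ * ‖u‖ := abs_real_inner_le_norm _ _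
      _ = 1 * dist x y := by rw [hun, dist_eq_norm]; ring
  have hφX : φ X = 0 := by simp [hφ]
  have hφY : φ Y = dist X Y := by
    rw [hφ, hu]
    simp only [real_inner_smul_right]
    rw [real_inner_self_eq_norm_sq]
    rw [dist_eq_norm, norm_sub_rev X Y, sq]
    field_simp
  have hIcc : Set.Icc (0:ℝ) (dist X Y) ⊆ φ '' K := by
    refine IsPreconnected.Icc_subset ?_ ⟨X, hX, hφX⟩ ⟨Y, hY, hφY⟩
    exact (hKconn.image φ hlip.continuous.continuousOn).isPreconnected
  calc ENNReal.ofReal (dist X Y) = μH[1] (Set.Icc (0:ℝ) (dist X Y)) := by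
        rw [MeasureTheory.hausdorffMeasure_real, Real.volume_Icc, sub_zero]
    _ ≤ μH[1] (φ '' K) := measure_mono hIcc
    _ ≤ ((1:NNReal):ENNReal) ^ (1:ℝ) * μH[1] K := hlip.hausdorffMeasure_image_le zero_le_one K
    _ = μH[1] K := by simp

lemma SteinerLength_eq (X Y Z : Plane) : SteinerLength X Y Z = (sInf (StSet X Y Z)).toReal := rfl

lemma sInf_map_le {f : Plane → Plane} {k : ℝ} (hk : 0 < k)
    (hf : ∀ x y, dist (f x) (f y) = k * dist x y) (X Y Z : Plane) :
    sInf (StSet (f X) (f Y) (f Z)) ≤ ENNReal.ofReal k * sInf (StSet X Y Z) := by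
  have hlip : LipschitzWith k.toNNReal f :=
    LipschitzWith.of_dist_le_mul fun x y => by
      rw [hf, Real.coe_toNNReal k hk.le]
  have hbound : ∀ m ∈ StSet X Y Z, sInf (StSet (f X) (f Y) (f Z)) ≤ ENNReal.ofReal k * m := by
    rintro m ⟨K, hKc, hKconn, hKsub, rfl⟩
    have h1 : μH[1] (f '' K) ∈ StSet (f X) (f Y) (f Z) := by
      refine ⟨f '' K, hKc.image hlip.continuous,
        hKconn.image f hlip.continuous.continuousOn, ?_, rfl⟩
      rintro t (rfl | rfl | rfl)
      · exact ⟨X, hKsub (by simp), rfl⟩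
      · exact ⟨Y, hKsub (by simp), rfl⟩
      · exact ⟨Z, hKsub (by simp), rfl⟩
    refine le_trans (sInf_le h1) ?_
    calc μH[1] (f '' K) ≤ ((k.toNNReal : ENNReal)) ^ (1:ℝ) * μH[1] K :=
          hlip.hausdorffMeasure_image_le zero_le_one K
      _ = ENNReal.ofReal k * μH[1] K := by rw [ENNReal.rpow_one]; rfl
  rw [sInf_eq_iInf' (StSet X Y Z), ENNReal.mul_iInf_of_ne
    (fun h => absurd (ENNReal.ofReal_eq_zero.mp h) hk.not_ge) ENNReal.ofReal_ne_top]
  exact le_iInf fun m => hbound m m.2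

lemma steiner_scale (X Y Z X' Y' Z' : Plane) {k : ℝ} (hk : 0 < k)
    (h1 : sInf (StSet X' Y' Z') ≤ ENNReal.ofReal k * sInf (StSet X Y Z))
    (h2 : sInf (StSet X Y Z) ≤ ENNReal.ofReal k⁻¹ * sInf (StSet X' Y' Z')) :
    SteinerLength X' Y' Z' = k * SteinerLength X Y Z := by
  have hc0 : ENNReal.ofReal k ≠ 0 := fun h => absurd (ENNReal.ofReal_eq_zero.mp h) hk.not_ge
  have hct : ENNReal.ofReal k ≠ ⊤ := ENNReal.ofReal_ne_top
  have h2' : ENNReal.ofReal k * sInf (StSet X Y Z) ≤ sInf (StSet X' Y' Z') := by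
    calc ENNReal.ofReal k * sInf (StSet X Y Z)
        ≤ ENNReal.ofReal k * (ENNReal.ofReal k⁻¹ * sInf (StSet X' Y' Z')) := by gcongr
      _ = sInf (StSet X' Y' Z') := by
          rw [ENNReal.ofReal_inv_of_pos hk, ← mul_assoc, ENNReal.mul_inv_cancel hc0 hct, one_mul]
  have heq : sInf (StSet X' Y' Z') = ENNReal.ofReal k * sInf (StSet X Y Z) :=
    le_antisymm h1 h2'
  rw [SteinerLength_eq, SteinerLength_eq, heq, ENNReal.toReal_mul, ENNReal.toReal_ofReal hk.le]

lemma exists_similarity (A B C A' B' C' : Plane) {k : ℝ} (hk : 0 < k)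
    (h1 : dist A' B' = k * dist A B) (h2 : dist B' C' = k * dist B C)
    (h3 : dist A' C' = k * dist A C)
    (hABne : A ≠ B) (hncol : ¬ Collinear ℝ ({A, B, C} : Set Plane)) :
    ∃ f : Plane → Plane, f A = A' ∧ f B = B' ∧ f C = C' ∧
      ∀ x y, dist (f x) (f y) = k * dist x y := by
  set u : Plane := B - A with hu_def
  set v : Plane := C - A with hv_def
  set u' : Plane := B' - A' with hu'_def
  set v' : Plane := C' - A' with hv'_def
  have hnu : ‖u'‖ = k * ‖u‖ := by
    rw [hu_def, hu'_def, ← dist_eq_norm, ← dist_eq_norm, dist_comm B' A', dist_comm B A]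
    exact h1
  have hnv : ‖v'‖ = k * ‖v‖ := by
    rw [hv_def, hv'_def, ← dist_eq_norm, ← dist_eq_norm, dist_comm C' A', dist_comm C A]
    exact h3
  have hnuv : ‖u' - v'‖ = k * ‖u - v‖ := by
    have e1 : u' - v' = B' - C' := by rw [hu'_def, hv'_def]; abel
    have e2 : u - v = B - C := by rw [hu_def, hv_def]; abel
    rw [e1, e2, ← dist_eq_norm, ← dist_eq_norm]
    exact h2
  have i01 : (inner ℝ u' v' : ℝ) = k ^ 2 * (inner ℝ u v : ℝ) := by
    have e1 := norm_sub_sq_real u v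
    have e2 := norm_sub_sq_real u' v'
    have e3 : ‖u' - v'‖ ^ 2 = k ^ 2 * ‖u - v‖ ^ 2 := by rw [hnuv]; ring
    have e4 : ‖u'‖ ^ 2 = k ^ 2 * ‖u‖ ^ 2 := by rw [hnu]; ring
    have e5 : ‖v'‖ ^ 2 = k ^ 2 * ‖v‖ ^ 2 := by rw [hnv]; ring
    nlinarith [e1, e2, e3, e4, e5]
  have i00 : (inner ℝ u' u' : ℝ) = k ^ 2 * (inner ℝ u u : ℝ) := by
    rw [real_inner_self_eq_norm_sq, real_inner_self_eq_norm_sq, hnu]; ring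
  have i11 : (inner ℝ v' v' : ℝ) = k ^ 2 * (inner ℝ v v : ℝ) := by
    rw [real_inner_self_eq_norm_sq, real_inner_self_eq_norm_sq, hnv]; ring
  have i10 : (inner ℝ v' u' : ℝ) = k ^ 2 * (inner ℝ v u : ℝ) := by
    have := i01; rwa [real_inner_comm v' u', real_inner_comm v u] at this
  have hu0 : u ≠ 0 := sub_ne_zero.mpr (Ne.symm hABne)
  have hli : LinearIndependent ℝ ![u, v] := by
    rw [LinearIndependent.pair_iff]
    intro s t hst
    have ht : t = 0 := by
      by_contra ht
      apply hncol
      have hveq : v = (-s / t) • u := by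
        have h4 : t • v = (-s) • u := by
          rw [neg_smul]
          linear_combination (norm := module) hst
        have h5 : v = t⁻¹ • ((-s) • u) := by rw [← h4, inv_smul_smul₀ ht]
        rw [h5, smul_smul]
        congr 1
        field_simp
      apply (collinear_iff_of_mem (Set.mem_insert A {B, C})).mpr
      refine ⟨u, ?_⟩
      rintro p (rfl | rfl | rfl)
      · exact ⟨0, by simp⟩
      · exact ⟨1, by simp [hu_def]⟩
      · exact ⟨-s / t, by rw [← hveq, hv_def]; simp⟩
    refine ⟨?_, ht⟩
    rw [ht, zero_smul, add_zero, smul_eq_zero] at hst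
    exact hst.resolve_right hu0
  have hcard : Fintype.card (Fin 2) = Module.finrank ℝ Plane := by simp
  set b : Module.Basis (Fin 2) ℝ Plane := basisOfLinearIndependentOfCardEqFinrank hli hcard with hb_def
  have hb : ⇑b = ![u, v] := coe_basisOfLinearIndependentOfCardEqFinrank hli hcard
  have hb0 : b 0 = u := by rw [hb]; rfl
  have hb1 : b 1 = v := by rw [hb]; rfl
  set L : Plane →ₗ[ℝ] Plane := b.constr ℝ ![u', v'] with hL_def
  have hL0 : L u = u' := by rw [← hb0, hL_def, Module.Basis.constr_basis]; rfl
  have hL1 : L v = v' := by rw [← hb1, hL_def, Module.Basis.constr_basis]; rfl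
  have hnorm : ∀ w : Plane, ‖L w‖ = k * ‖w‖ := by
    intro w
    have hw := b.sum_repr w
    rw [Fin.sum_univ_two, hb0, hb1] at hw
    set s : ℝ := b.repr w 0
    set t : ℝ := b.repr w 1
    have hLw : L w = s • u' + t • v' := by
      rw [← hw, map_add]
      simp only [LinearMap.map_smul]
      rw [hL0, hL1]
    have hsq : ‖L w‖ ^ 2 = (k * ‖w‖) ^ 2 := by
      have lhs : ‖L w‖ ^ 2 = (inner ℝ (L w) (L w) : ℝ) := (real_inner_self_eq_norm_sq _).symm
      have rhs : (k * ‖w‖) ^ 2 = k ^ 2 * (inner ℝ w w : ℝ) := by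
        rw [real_inner_self_eq_norm_sq]; ring
      rw [lhs, rhs, hLw, ← hw]
      simp only [inner_add_left, inner_add_right, real_inner_smul_left, real_inner_smul_right]
      rw [i00, i01, i10, i11]
      ring
    exact (sq_eq_sq₀ (norm_nonneg _) (by positivity)).mp hsq
  refine ⟨fun x => A' + L (x - A), ?_, ?_, ?_, ?_⟩
  · simp
  · show A' + L (B - A) = B'
    rw [← hu_def, hL0, hu'_def]; abel
  · show A' + L (C - A) = C'
    rw [← hv_def, hL1, hv'_def]; abel
  · intro x y
    rw [dist_eq_norm, dist_eq_norm, add_sub_add_left_eq_sub, ← map_sub,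
      sub_sub_sub_cancel_right, hnorm]

lemma hasDerivAt_norm_sub_smul {X u : Plane} (hX : X ≠ 0) (hu : ‖u‖ = 1) :
    HasDerivAt (fun t : ℝ => ‖X - t • u‖) (-(inner ℝ X u : ℝ) / ‖X‖) 0 := by
  set c : ℝ := inner ℝ X u with hc
  have hq : ∀ t : ℝ, ‖X - t • u‖ = Real.sqrt (‖X‖ ^ 2 - 2 * c * t + t ^ 2) := by
    intro t
    rw [← Real.sqrt_sq (norm_nonneg (X - t • u))]
    congr 1
    rw [norm_sub_sq_real, real_inner_smul_right, norm_smul, hu, Real.norm_eq_abs, mul_one, sq_abs]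
    ring
  have hpoly : HasDerivAt (fun t : ℝ => ‖X‖ ^ 2 - 2 * c * t + t ^ 2) (-2 * c) 0 := by
    have h1 : HasDerivAt (fun t : ℝ => 2 * c * t) (2 * c) 0 := by
      simpa using (hasDerivAt_id (0:ℝ)).const_mul (2 * c)
    have h2 : HasDerivAt (fun t : ℝ => t ^ 2) (0 : ℝ) 0 := by
      simpa using hasDerivAt_pow 2 (0:ℝ)
    exact (((hasDerivAt_const (0:ℝ) (‖X‖ ^ 2)).sub h1).add h2).congr_deriv (by ring)
  have h0 : ‖X‖ ^ 2 - 2 * c * 0 + 0 ^ 2 ≠ 0 := by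
    have : ‖X‖ ≠ 0 := norm_ne_zero_iff.mpr hX
    simpa using pow_ne_zero 2 this
  have hder := hpoly.sqrt h0
  have hval : -2 * c / (2 * Real.sqrt (‖X‖ ^ 2 - 2 * c * 0 + 0 ^ 2)) = -c / ‖X‖ := by
    rw [show ‖X‖ ^ 2 - 2 * c * 0 + 0 ^ 2 = ‖X‖ ^ 2 by ring, Real.sqrt_sq (norm_nonneg X)]
    have : ‖X‖ ≠ 0 := norm_ne_zero_iff.mpr hX
    field_simp
  rw [hval] at hder
  have hfun : (fun t : ℝ => Real.sqrt (‖X‖ ^ 2 - 2 * c * t + t ^ 2)) =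
      fun t : ℝ => ‖X - t • u‖ := by
    funext t; rw [hq t]
  rw [hfun] at hder
  exact hder

lemma steiner_lt (A B C : Plane) (hABne : A ≠ B) (hBCne : B ≠ C)
    (hang : ∠ A B C < 2 * Real.pi / 3) :
    SteinerLength A B C < dist A B + dist B C := by
  set a : Plane := A - B with ha_def
  set c : Plane := C - B with hc_def
  have ha0 : a ≠ 0 := sub_ne_zero.mpr hABne
  have hc0 : c ≠ 0 := sub_ne_zero.mpr (Ne.symm hBCne)
  have hna : ‖a‖ ≠ 0 := norm_ne_zero_iff.mpr ha0
  have hnc : ‖c‖ ≠ 0 := norm_ne_zero_iff.mpr hc0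
  set ah : Plane := ‖a‖⁻¹ • a with hah_def
  set ch : Plane := ‖c‖⁻¹ • c with hch_def
  have hnah : ‖ah‖ = 1 := norm_smul_inv_norm ha0
  have hnch : ‖ch‖ = 1 := norm_smul_inv_norm hc0
  have hcos : Real.cos (∠ A B C) = (inner ℝ ah ch : ℝ) := by
    have h1 : ∠ A B C = InnerProductGeometry.angle a c := rfl
    rw [h1, InnerProductGeometry.cos_angle, hah_def, hch_def,
      real_inner_smul_left, real_inner_smul_right]
    field_simp
  have hcos23 : Real.cos (2 * Real.pi / 3) = -(1/2) := by
    rw [show (2 * Real.pi / 3 : ℝ) = Real.pi - Real.pi / 3 by ring, Real.cos_pi_sub,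
      Real.cos_pi_div_three]
  have hpi := Real.pi_pos
  have hcoslt : -(1/2) < (inner ℝ ah ch : ℝ) := by
    rw [← hcos, ← hcos23]
    exact Real.strictAntiOn_cos ⟨angle_nonneg A B C, angle_le_pi A B C⟩
      ⟨by linarith, by linarith⟩ hang
  set w : Plane := ah + ch with hw_def
  have hw2 : ‖w‖ ^ 2 = 2 + 2 * (inner ℝ ah ch : ℝ) := by
    rw [hw_def, norm_add_sq_real, hnah, hnch]; ring
  have hw1 : 1 < ‖w‖ := by nlinarith [norm_nonneg w]
  have hw0 : w ≠ 0 := by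
    intro h
    rw [h, norm_zero] at hw1
    linarith
  have hnw : ‖w‖ ≠ 0 := norm_ne_zero_iff.mpr hw0
  set e : Plane := ‖w‖⁻¹ • w with he_def
  have hne : ‖e‖ = 1 := norm_smul_inv_norm hw0
  set g : ℝ → ℝ := fun t => ‖a - t • e‖ + ‖c - t • e‖ + t with hg_def
  have hg : HasDerivAt g (-(inner ℝ a e : ℝ) / ‖a‖ + -(inner ℝ c e : ℝ) / ‖c‖ + 1) 0 :=
    ((hasDerivAt_norm_sub_smul ha0 hne).add (hasDerivAt_norm_sub_smul hc0 hne)).add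
      (hasDerivAt_id 0)
  have hD : -(inner ℝ a e : ℝ) / ‖a‖ + -(inner ℝ c e : ℝ) / ‖c‖ + 1 = 1 - ‖w‖ := by
    have ea : (inner ℝ a e : ℝ) / ‖a‖ = (inner ℝ ah e : ℝ) := by
      rw [hah_def, real_inner_smul_left, div_eq_inv_mul]
    have ec : (inner ℝ c e : ℝ) / ‖c‖ = (inner ℝ ch e : ℝ) := by
      rw [hch_def, real_inner_smul_left, div_eq_inv_mul]
    have ew : (inner ℝ ah e : ℝ) + (inner ℝ ch e : ℝ) = ‖w‖ := by
      rw [← inner_add_left, ← hw_def, he_def, real_inner_smul_right,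
        real_inner_self_eq_norm_sq]
      field_simp
    have : -(inner ℝ a e : ℝ) / ‖a‖ = -((inner ℝ a e : ℝ) / ‖a‖) := by ring
    rw [this, ea, show -(inner ℝ c e : ℝ) / ‖c‖ = -((inner ℝ c e : ℝ) / ‖c‖) by ring, ec]
    linarith
  rw [hD] at hg
  have hslope := hasDerivAt_iff_tendsto_slope.mp hg
  have hev : ∀ᶠ t in 𝓝[≠] (0:ℝ), slope g 0 t < 0 :=
    hslope.eventually_lt_const (by linarith)
  have hsub : Set.Ioi (0:ℝ) ⊆ {(0:ℝ)}ᶜ := fun x hx => by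
    simp only [Set.mem_compl_iff, Set.mem_singleton_iff]
    exact ne_of_gt hx
  have hev2 : ∀ᶠ t in 𝓝[>] (0:ℝ), slope g 0 t < 0 ∧ 0 < t :=
    (hev.filter_mono (nhdsWithin_mono _ hsub)).and self_mem_nhdsWithin
  obtain ⟨t, hts, ht0⟩ := hev2.exists
  have hgt : g t < g 0 := by
    rw [slope_def_field, sub_zero, div_neg_iff] at hts
    rcases hts with ⟨h1, h2⟩ | ⟨h1, h2⟩
    · linarith
    · linarith
  have hg0 : g 0 = dist A B + dist B C := by
    rw [hg_def]
    simp only [zero_smul, sub_zero, add_zero]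
    rw [ha_def, hc_def, ← dist_eq_norm, ← dist_eq_norm, dist_comm C B]
  set P : Plane := B + t • e with hP_def
  have hPA : dist P A = ‖a - t • e‖ := by
    rw [dist_eq_norm, hP_def, ha_def, ← norm_sub_rev]
    congr 1
    abel
  have hPB : dist P B = t := by
    rw [dist_eq_norm, hP_def, add_sub_cancel_left, norm_smul, hne, Real.norm_eq_abs,
      abs_of_pos ht0, mul_one]
  have hPC : dist P C = ‖c - t • e‖ := by
    rw [dist_eq_norm, hP_def, hc_def, ← norm_sub_rev]
    congr 1
    abel
  have hle : SteinerLength A B C ≤ g t := by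
    rw [SteinerLength_eq]
    refine ENNReal.toReal_le_of_le_ofReal ?_ ?_
    · have := add_nonneg (add_nonneg (norm_nonneg (a - t • e)) (norm_nonneg (c - t • e))) ht0.le
      simpa [hg_def] using this
    · have h7 := sInf_StSet_le_tree A B C P
      rw [hPA, hPB, hPC] at h7
      convert h7 using 2
      rw [hg_def]
      ring
  linarith

lemma not_collinear_of_angles (A B C : Plane) (hAB : A ≠ B) (hBC : B ≠ C) (hAC : A ≠ C)
    (hB : ∠ A B C < 2 * Real.pi / 3) (hC : ∠ B C A < 2 * Real.pi / 3)
    (hA : ∠ C A B < 2 * Real.pi / 3) : ¬ Collinear ℝ ({A, B, C} : Set Plane) := by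
  intro h
  have hpi := Real.pi_pos
  rcases h.wbtw_or_wbtw_or_wbtw with h1 | h2 | h3
  · have : ∠ A B C = Real.pi := Sbtw.angle₁₂₃_eq_pi ⟨h1, hAB.symm, hBC⟩
    linarith
  · have : ∠ B C A = Real.pi := Sbtw.angle₁₂₃_eq_pi ⟨h2, hBC.symm, hAC.symm⟩
    linarith
  · have : ∠ C A B = Real.pi := Sbtw.angle₁₂₃_eq_pi ⟨h3, hAC, hAB⟩
    linarith

lemma steiner_ge (A B C : Plane) : dist A B ≤ SteinerLength A B C := by
  have h1 : ENNReal.ofReal (dist A B) ≤ sInf (StSet A B C) :=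
    le_sInf fun m hm => lower_bound hm
  calc dist A B = (ENNReal.ofReal (dist A B)).toReal :=
        (ENNReal.toReal_ofReal dist_nonneg).symm
    _ ≤ (sInf (StSet A B C)).toReal := ENNReal.toReal_mono (sInf_StSet_ne_top A B C) h1

/-- for an isosceles triangle with all angles `< 2π/3`, the normalized
Steiner deficit `(2|AB| − m(A,B,C))/|AB|` depends only on the angles of the triangle,
and is strictly between `0` and `2`. -/
theorem steiner_deficit_depends_only_on_angles
    (A B C A' B' C' : Plane)
    (hAB : A ≠ B) (hBC : B ≠ C) (hAC : A ≠ C)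
    (hAB' : A' ≠ B') (hBC' : B' ≠ C') (hAC' : A' ≠ C')
    (hiso : dist A B = dist B C) (hiso' : dist A' B' = dist B' C')
    (hangB : ∠ A B C = ∠ A' B' C') (hangC : ∠ B C A = ∠ B' C' A')
    (hB : ∠ A B C < 2 * Real.pi / 3) (hC : ∠ B C A < 2 * Real.pi / 3)
    (hA : ∠ C A B < 2 * Real.pi / 3) :
    (2 * dist A B - SteinerLength A B C) / dist A B =
      (2 * dist A' B' - SteinerLength A' B' C') / dist A' B' ∧
    0 < 2 * dist A B - SteinerLength A B C ∧
    2 * dist A B - SteinerLength A B C < 2 * dist A B := by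
  have hpi := Real.pi_pos
  have hdAB : 0 < dist A B := dist_pos.mpr hAB
  have hdAB' : 0 < dist A' B' := dist_pos.mpr hAB'
  set k : ℝ := dist A' B' / dist A B with hk_def
  have hk : 0 < k := div_pos hdAB' hdAB
  have hB' : ∠ A' B' C' < 2 * Real.pi / 3 := hangB ▸ hB
  have hC' : ∠ B' C' A' < 2 * Real.pi / 3 := hangC ▸ hC
  have hsum : ∠ A B C + ∠ B C A + ∠ C A B = Real.pi :=
    angle_add_angle_add_angle_eq_pi C hAB.symm
  have hsum' : ∠ A' B' C' + ∠ B' C' A' + ∠ C' A' B' = Real.pi :=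
    angle_add_angle_add_angle_eq_pi C' hAB'.symm
  have hA' : ∠ C' A' B' < 2 * Real.pi / 3 := by
    rw [← hangB, ← hangC] at hsum'
    linarith
  have hncol := not_collinear_of_angles A B C hAB hBC hAC hB hC hA
  have hncol' := not_collinear_of_angles A' B' C' hAB' hBC' hAC' hB' hC' hA'
  have h1 : dist A' B' = k * dist A B := by
    rw [hk_def]; field_simp
  have h2 : dist B' C' = k * dist B C := by rw [← hiso', ← hiso]; exact h1
  have h3 : dist A' C' = k * dist A C :=
    dist_mul_of_eq_angle_of_dist_mul A B C A' B' C' k hangB.symm h1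
      (by rw [dist_comm C' B', dist_comm C B]; exact h2)
  have hk' : 0 < k⁻¹ := inv_pos.mpr hk
  have h1' : dist A B = k⁻¹ * dist A' B' := by
    rw [h1]; field_simp
  have h2' : dist B C = k⁻¹ * dist B' C' := by
    rw [h2]; field_simp
  have h3' : dist A C = k⁻¹ * dist A' C' := by
    rw [h3]; field_simp
  obtain ⟨f, hfA, hfB, hfC, hfd⟩ :=
    exists_similarity A B C A' B' C' hk h1 h2 h3 hAB hncol
  obtain ⟨g, hgA, hgB, hgC, hgd⟩ :=
    exists_similarity A' B' C' A B C hk' h1' h2' h3' hAB' hncol'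
  have hineq1 : sInf (StSet A' B' C') ≤ ENNReal.ofReal k * sInf (StSet A B C) := by
    have := sInf_map_le hk hfd A B C
    rwa [hfA, hfB, hfC] at this
  have hineq2 : sInf (StSet A B C) ≤ ENNReal.ofReal k⁻¹ * sInf (StSet A' B' C') := by
    have := sInf_map_le hk' hgd A' B' C'
    rwa [hgA, hgB, hgC] at this
  have hscale : SteinerLength A' B' C' = k * SteinerLength A B C :=
    steiner_scale A B C A' B' C' hk hineq1 hineq2
  have hlt : SteinerLength A B C < dist A B + dist B C := steiner_lt A B C hAB hBC hB
  have hge : dist A B ≤ SteinerLength A B C := steiner_ge A B C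
  refine ⟨?_, by linarith, by linarith⟩
  rw [hscale, h1]
  rw [div_eq_div_iff hdAB.ne' (by positivity)]
  ring
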